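/- Key claim in computing the Hausdorff rank of L_T for a fat well-founded tree T ⊆ (2Ω)^{<ω}: for all ρ ∈ T, all n ∈ ω, and all ordinals α ≥ 1, the elements ρ⌢n and ρ⌢(n+1) of T⁺∪(descendant-types) lie in the same class of the α-th Hausdorff iterate of L_T if and only if the rank of ρ⌢(n,n+1) in T is strictly less than α (with the convention that r_T(σ) = 0 if σ ∉ T). -/

import Mathlib

/-- The symbols `ω ∪ Ω ∪ {∞}`: `fin n` is the natural number `n`, `pair n` is the
pair `(n, n+1) ∈ Ω`, and `infty` is `∞`. -/
inductive Symb : Type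
  | fin : ℕ → Symb
  | pair : ℕ → Symb
  | infty : Symb
deriving DecidableEq

/-- Position of a symbol in the order `0 < (0,1) < 1 < (1,2) < 2 < ⋯ < ∞`. -/
def Symb.val : Symb → WithTop ℕ
  | .fin n => ((2 * n : ℕ) : WithTop ℕ)
  | .pair n => ((2 * n + 1 : ℕ) : WithTop ℕ)
  | .infty => ⊤

theorem Symb.val_injective : Function.Injective Symb.val := by
  rintro (n | n | _) (m | m | _) h <;>
    simp only [Symb.val] at h <;>
    first
      | rfl
      | (norm_cast at h <;> first | (congr 1; omega) | (exact absurd h (by omega)))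

/-- The linear order `0 < (0,1) < 1 < (1,2) < 2 < ⋯ < ∞` on `ω ∪ Ω ∪ {∞}`. -/
instance : LinearOrder Symb := LinearOrder.lift' Symb.val Symb.val_injective

noncomputable section

variable {α : Type*}

/-- A tree on `α`: a set of finite sequences closed under initial segments. -/
def IsTree (T : Set (List α)) : Prop :=
  ∀ σ ∈ T, ∀ τ : List α, τ <+: σ → τ ∈ T

/-- `σ` lies on an infinite path of `T`. -/
def IllNode (T : Set (List α)) (σ : List α) : Prop :=
  ∃ f : ℕ → α, ∀ n : ℕ, σ ++ List.ofFn (fun i : Fin n => f i) ∈ T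

/-- `T` is well-founded: it has no infinite path. -/
def WellFoundedTree (T : Set (List α)) : Prop := ¬ IllNode T []

/-- The set of nodes of `T` removed within `γ` rounds of leaf-removal:
a node is removed by stage `γ` if each of its children was removed at some earlier stage. -/
def prunedAt (T : Set (List α)) (γ : Ordinal.{0}) : Set (List α) :=
  Ordinal.lt_wf.fix (C := fun _ => Set (List α))
    (fun γ ih =>
      {σ | σ ∈ T ∧ ∀ a : α, σ ++ [a] ∈ T → ∃ β : Ordinal.{0}, ∃ h : β < γ, σ ++ [a] ∈ ih β h}) γ

open Classical in
/-- The rank of a node of `T`: nodes on an infinite path get rank `∞ = ⊤`;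
well-founded nodes get the paper's ordinal rank, so that leaves have rank `1` and
the rank of a node is computed from the stage at which leaf-removal removes it. -/
def erank (T : Set (List α)) (σ : List α) : WithTop Ordinal.{0} :=
  if IllNode T σ then ⊤
  else ((sInf {γ : Ordinal.{0} | σ ∈ prunedAt T γ} + 1 : Ordinal) : WithTop Ordinal.{0})

/-- `β < γ` for extended ranks, with the paper's convention that `∞ < ∞` is true. -/
def eLT (β γ : WithTop Ordinal.{0}) : Prop := β < γ ∨ (β = ⊤ ∧ γ = ⊤)

/-- `T` is fat: every node `σ ∈ T` of rank `α` has, for every (attained, i.e. `≥ 1`) rank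
`β < α`, infinitely many children in `T` of rank exactly `β`. -/
def FatTree (T : Set (List α)) : Prop :=
  ∀ σ ∈ T, ∀ β : WithTop Ordinal.{0}, 1 ≤ β → eLT β (erank T σ) →
    {a : α | σ ++ [a] ∈ T ∧ erank T (σ ++ [a]) = β}.Infinite

end

noncomputable section

/-- Given a relation `E` on a linear order, `hausdorffRel E a b` says that the closed
interval between `a` and `b` is covered by finitely many `E`-classes; when `E` is an
equivalence relation this is the pullback of the Hausdorff relation on the quotient. -/
def hausdorffRel {L : Type*} [LinearOrder L] (E : L → L → Prop) (a b : L) : Prop :=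
  ∃ s : Finset L, ∀ c : L, min a b ≤ c → c ≤ max a b → ∃ d ∈ s, E c d

/-- The transfinite iterates of the Hausdorff derivative relation on a linear order `L`:
`H_0` is equality, `H_{α+1}` is the pullback of the Hausdorff relation on the quotient
`L / H_α`, and at limits one takes unions. -/
def hausdorffIter (L : Type*) [LinearOrder L] (γ : Ordinal.{0}) : L → L → Prop :=
  Ordinal.limitRecOn (motive := fun _ => L → L → Prop) γ Eq
    (fun _ IH => hausdorffRel IH)
    (fun γ _ IH a b => ∃ β : Ordinal.{0}, ∃ h : β < γ, IH β h a b)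

/-- A linear order is scattered if the rationals do not order-embed into it. -/
def Scattered (L : Type*) [LinearOrder L] : Prop :=
  ¬ ∃ e : ℚ → L, ∀ q r : ℚ, q < r → e q < e r

end

/-- `T⁺ = {σ⌢a : σ ∈ T, σ⌢a ∉ T}` where `a` ranges over all symbols of `ω ∪ Ω ∪ {∞}`. -/
def Tplus (T : Set (List Symb)) : Set (List Symb) :=
  {l : List Symb | ∃ σ ∈ T, ∃ a : Symb, l = σ ++ [a] ∧ σ ++ [a] ∉ T}

open Classical in
/-- The rank of a node, with the convention that `r_T(σ) = 0` if `σ ∉ T`. -/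
noncomputable def erank0 (T : Set (List Symb)) (σ : List Symb) : WithTop Ordinal.{0} :=
  if σ ∈ T then erank T σ else 0

namespace Symb

theorem lt_iff_val {a b : Symb} : a < b ↔ a.val < b.val := Iff.rfl
theorem le_iff_val {a b : Symb} : a ≤ b ↔ a.val ≤ b.val := Iff.rfl

theorem fin_lt_fin {m n : ℕ} : (fin m < fin n) ↔ m < n := by
  rw [lt_iff_val]; simp only [Symb.val]; rw [Nat.cast_lt]; omega

theorem fin_lt_pair {m n : ℕ} : (fin m < pair n) ↔ m ≤ n := by
  rw [lt_iff_val]; simp only [Symb.val]; rw [Nat.cast_lt]; omega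

theorem pair_lt_fin {m n : ℕ} : (pair m < fin n) ↔ m < n := by
  rw [lt_iff_val]; simp only [Symb.val]; rw [Nat.cast_lt]; omega

theorem not_infty_lt {b : Symb} : ¬ (infty < b) := by
  rw [lt_iff_val]; exact not_top_lt

theorem fin_zero_le (a : Symb) : fin 0 ≤ a := by
  rw [le_iff_val]; cases a <;> simp [Symb.val]

theorem not_lt_fin_zero (a : Symb) : ¬ a < fin 0 := not_lt.2 (fin_zero_le a)

theorem eq_fin_or_pair {b : Symb} {k : ℕ} (h1 : fin k ≤ b) (h2 : b < fin (k+1)) :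
    b = fin k ∨ b = pair k := by
  cases b with
  | fin m => left; rw [fin_lt_fin] at h2
             rw [le_iff_val] at h1; simp only [Symb.val, Nat.cast_le] at h1
             congr 1; omega
  | pair m => right; rw [pair_lt_fin] at h2
              rw [le_iff_val] at h1; simp only [Symb.val, Nat.cast_le] at h1
              congr 1; omega
  | infty => exact absurd h2 not_infty_lt

theorem lt_infty_exists {b : Symb} (h : b < infty) : ∃ m, b < fin m := by
  cases b with
  | fin m => exact ⟨m+1, fin_lt_fin.2 (Nat.lt_succ_self m)⟩
  | pair m => exact ⟨m+1, pair_lt_fin.2 (Nat.lt_succ_self m)⟩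
  | infty => exact absurd h not_infty_lt

end Symb

section ListLex
variable {α : Type*} [LinearOrder α]

theorem list_not_lt_nil (l : List α) : ¬ l < ([] : List α) := by
  intro h
  have h' : List.Lex (· < ·) l [] := h
  cases h'

theorem list_cons_lt_cons_iff {a b : α} {u v : List α} :
    a :: u < b :: v ↔ a < b ∨ (a = b ∧ u < v) := by
  constructor
  · intro h
    have h' : List.Lex (· < ·) (a :: u) (b :: v) := h
    cases h' with
    | cons h => exact Or.inr ⟨rfl, h⟩
    | rel h => exact Or.inl h
  · rintro (h | ⟨rfl, h⟩)
    · exact List.Lex.rel h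
    · exact List.Lex.cons h

theorem list_append_lt_append_iff {σ u v : List α} : σ ++ u < σ ++ v ↔ u < v := by
  induction σ with
  | nil => rfl
  | cons a σ ih => simpa [List.cons_append, list_cons_lt_cons_iff] using ih

theorem list_le_append (σ u : List α) : σ ≤ σ ++ u := by
  cases u with
  | nil => simp
  | cons b v =>
    conv_lhs => rw [← List.append_nil σ]
    exact le_of_lt (list_append_lt_append_iff.2 (List.nil_lt_cons _ _))

theorem lex_sandwich {ρ x : List α} {c d : α} (h1 : ρ ++ [c] < x) (h2 : x < ρ ++ [d]) :
    ∃ z, x = ρ ++ z ∧ [c] < z ∧ z < [d] := by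
  induction ρ generalizing x with
  | nil => exact ⟨x, rfl, h1, h2⟩
  | cons a ρ ih =>
    cases x with
    | nil => exact absurd h1 (list_not_lt_nil _)
    | cons b y =>
      rw [List.cons_append] at h1 h2
      rcases list_cons_lt_cons_iff.1 h1 with h | ⟨rfl, h1'⟩
      · rcases list_cons_lt_cons_iff.1 h2 with h' | ⟨h', _⟩
        · exact absurd (h.trans h') (lt_irrefl _)
        · exact absurd (h'.symm ▸ h) (lt_irrefl _)
      · rcases list_cons_lt_cons_iff.1 h2 with h' | ⟨_, h2'⟩
        · exact absurd h' (lt_irrefl _)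
        · obtain ⟨z, rfl, hz1, hz2⟩ := ih h1' h2'
          exact ⟨z, rfl, hz1, hz2⟩

theorem z_decomp {c d : α} {z : List α} (h1 : [c] < z) (h2 : z < [d]) :
    ∃ b y, z = b :: y ∧ c ≤ b ∧ b < d ∧ (c = b → y ≠ []) := by
  cases z with
  | nil => exact absurd h1 (list_not_lt_nil _)
  | cons b y =>
    refine ⟨b, y, rfl, ?_, ?_, ?_⟩
    · rcases list_cons_lt_cons_iff.1 h1 with h | ⟨rfl, _⟩
      · exact le_of_lt h
      · exact le_rfl
    · rcases list_cons_lt_cons_iff.1 h2 with h | ⟨rfl, h⟩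
      · exact h
      · exact absurd h (list_not_lt_nil _)
    · rintro rfl rfl
      rcases list_cons_lt_cons_iff.1 h1 with h | ⟨_, h⟩
      · exact lt_irrefl _ h
      · exact list_not_lt_nil _ h

end ListLex

-- section 3: prunedAt / erank machinery
section Pruning
variable {α : Type*}

theorem prunedAt_eq (T : Set (List α)) (γ : Ordinal.{0}) :
    prunedAt T γ = {σ | σ ∈ T ∧ ∀ a : α, σ ++ [a] ∈ T →
      ∃ β : Ordinal.{0}, β < γ ∧ σ ++ [a] ∈ prunedAt T β} := by
  rw [prunedAt, Ordinal.lt_wf.fix_eq]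
  simp only [prunedAt, exists_prop]

/-- stage of pruning -/
noncomputable def prk (T : Set (List α)) (σ : List α) : Ordinal.{0} :=
  sInf {γ : Ordinal.{0} | σ ∈ prunedAt T γ}

theorem illnode_glue {T : Set (List Symb)} (hTree : IsTree T) {σ : List Symb}
    (hσT : σ ∈ T) (hσ : IllNode T σ) : IllNode T [] := by
  obtain ⟨f, hf⟩ := hσ
  refine ⟨fun i => if h : i < σ.length then σ.get ⟨i, h⟩ else f (i - σ.length), fun n => ?_⟩
  have key : List.ofFn (fun j : Fin n =>
      if h : (j : ℕ) < σ.length then σ.get ⟨j, h⟩ else f ((j : ℕ) - σ.length))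
      = (σ ++ List.ofFn (fun j : Fin n => f j)).take n := by
    apply List.ext_getElem
    · simp
    · intro i h1 h2
      simp only [List.getElem_ofFn, List.getElem_take]
      rcases lt_or_ge i σ.length with h | h
      · rw [List.getElem_append_left h]; simp [h, List.get_eq_getElem]
      · rw [List.getElem_append_right h]
        simp [not_lt.2 h, List.getElem_ofFn]
  rw [List.nil_append, key]
  exact hTree _ (hf n) _ (List.take_prefix _ _)

theorem illnode_of_unpruned {T : Set (List Symb)} {σ₀ : List Symb} (hσ₀ : σ₀ ∈ T)
    (h : ∀ γ, σ₀ ∉ prunedAt T γ) : IllNode T σ₀ := by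
  set S : Set (List Symb) := {σ | σ ∈ T ∧ ∀ γ, σ ∉ prunedAt T γ} with hS
  have step : ∀ σ : {l : List Symb // l ∈ S}, ∃ a : Symb, σ.1 ++ [a] ∈ S := by
    rintro ⟨σ, hσT, hσ⟩
    by_contra hc
    push_neg at hc
    have hch : ∀ a : Symb, σ ++ [a] ∈ T → ∃ γ, σ ++ [a] ∈ prunedAt T γ := by
      intro a ha
      by_contra h2; push_neg at h2
      exact hc a ⟨ha, h2⟩
    choose g hg using hch
    classical
    set g' : Symb → Ordinal.{0} := fun a => if h : σ ++ [a] ∈ T then g a h else 0 with hg'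
    set Γ : Ordinal.{0} := ⨆ a : Symb, g' a with hΓ
    apply hσ (Γ + 1)
    rw [prunedAt_eq]
    refine ⟨hσT, fun a ha => ⟨g a ha, ?_, hg a ha⟩⟩
    have hb1 : g a ha ≤ Γ := by
      have : g' a = g a ha := dif_pos ha
      rw [← this]
      exact le_ciSup (Ordinal.bddAbove_range _) a
    calc g a ha ≤ Γ := hb1
    _ < Γ + 1 := by rw [Ordinal.add_one_eq_succ]; exact Order.lt_succ _
  choose F hF using step
  let g : ℕ → {l : List Symb // l ∈ S} :=
    fun n => Nat.rec ⟨σ₀, hσ₀, h⟩ (fun _ σ => ⟨σ.1 ++ [F σ], hF σ⟩) n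
  have gsucc : ∀ n, (g (n+1)).1 = (g n).1 ++ [F (g n)] := fun n => rfl
  have key : ∀ n, (g n).1 = σ₀ ++ List.ofFn (fun i : Fin n => F (g i)) := by
    intro n; induction n with
    | zero => simp [g]
    | succ n ih =>
      rw [gsucc n]
      rw [ih, List.ofFn_succ', List.concat_eq_append, ← List.append_assoc]
      simp
  refine ⟨fun n => F (g n), fun n => ?_⟩
  rw [← key n]
  exact (g n).2.1

theorem exists_pruned {T : Set (List Symb)} (hTree : IsTree T) (hwf : WellFoundedTree T)
    {σ : List Symb} (hσ : σ ∈ T) : ∃ γ, σ ∈ prunedAt T γ := by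
  by_contra hc; push_neg at hc
  exact hwf (illnode_glue hTree hσ (illnode_of_unpruned hσ hc))

theorem mem_prunedAt_prk {T : Set (List Symb)} (hTree : IsTree T) (hwf : WellFoundedTree T)
    {σ : List Symb} (hσ : σ ∈ T) : σ ∈ prunedAt T (prk T σ) :=
  csInf_mem (exists_pruned hTree hwf hσ)

theorem prk_le {T : Set (List Symb)} {σ : List Symb} {γ : Ordinal.{0}}
    (h : σ ∈ prunedAt T γ) : prk T σ ≤ γ := csInf_le' h

theorem prk_child_lt {T : Set (List Symb)} (hTree : IsTree T) (hwf : WellFoundedTree T)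
    {σ : List Symb} (hσ : σ ∈ T) {a : Symb} (hc : σ ++ [a] ∈ T) :
    prk T (σ ++ [a]) < prk T σ := by
  have h := mem_prunedAt_prk hTree hwf hσ
  rw [prunedAt_eq] at h
  obtain ⟨β, hβ, hmem⟩ := h.2 a hc
  exact lt_of_le_of_lt (prk_le hmem) hβ

theorem not_illnode {T : Set (List Symb)} (hTree : IsTree T) (hwf : WellFoundedTree T)
    {σ : List Symb} (hσ : σ ∈ T) : ¬ IllNode T σ :=
  fun h => hwf (illnode_glue hTree hσ h)

theorem erank_eq {T : Set (List Symb)} (hTree : IsTree T) (hwf : WellFoundedTree T)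
    {σ : List Symb} (hσ : σ ∈ T) :
    erank T σ = ((prk T σ + 1 : Ordinal.{0}) : WithTop Ordinal.{0}) := by
  rw [erank, if_neg (not_illnode hTree hwf hσ)]
  rfl

end Pruning
section Hausdorff
variable {L : Type*} [LinearOrder L]

theorem hiter_zero : hausdorffIter L 0 = Eq :=
  Ordinal.limitRecOn_zero _ _ _

theorem hiter_succ (γ : Ordinal.{0}) :
    hausdorffIter L (Order.succ γ) = hausdorffRel (hausdorffIter L γ) :=
  Ordinal.limitRecOn_succ _ _ _ _

theorem hiter_limit {γ : Ordinal.{0}} (h : Order.IsSuccLimit γ) (a b : L) :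
    hausdorffIter L γ a b ↔ ∃ β : Ordinal.{0}, β < γ ∧ hausdorffIter L β a b := by
  show Ordinal.limitRecOn (motive := fun _ => L → L → Prop) γ _ _ _ a b ↔ _
  rw [Ordinal.limitRecOn_limit _ _ _ _ h]
  simp only [exists_prop]
  rfl

theorem hiter_pkg (γ : Ordinal.{0}) :
    Equivalence (hausdorffIter L γ) ∧
    (∀ a b c : L, a ≤ b → b ≤ c → hausdorffIter L γ a c → hausdorffIter L γ a b) ∧
    (∀ β : Ordinal.{0}, β ≤ γ → ∀ a b : L, hausdorffIter L β a b → hausdorffIter L γ a b) := by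
  induction γ using Ordinal.limitRecOn with
  | zero =>
    rw [hiter_zero]
    refine ⟨eq_equivalence, fun a b c h1 h2 hac => ?_, fun β hβ => ?_⟩
    · exact (le_antisymm (h2.trans_eq hac.symm) h1).symm
    · rw [nonpos_iff_eq_zero.1 hβ, hiter_zero]
      exact fun a b h => h
  | add_one γ ih =>
    rw [Ordinal.add_one_eq_succ]
    obtain ⟨⟨erefl, esymm, etrans⟩, econv, emono⟩ := ih
    rw [hiter_succ]
    set E := hausdorffIter L γ with hE
    have hrefl : ∀ a : L, hausdorffRel E a a := by
      intro a
      refine ⟨{a}, fun c h1 h2 => ⟨a, Finset.mem_singleton_self a, ?_⟩⟩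
      rw [min_self] at h1; rw [max_self] at h2
      rw [le_antisymm h2 h1]
      exact erefl a
    have hsymm : ∀ {a b : L}, hausdorffRel E a b → hausdorffRel E b a := by
      rintro a b ⟨s, hs⟩
      exact ⟨s, fun c h1 h2 => hs c (by rwa [min_comm]) (by rwa [max_comm])⟩
    have hincl : ∀ a b : L, E a b → hausdorffRel E a b := by
      intro a b hab
      rcases le_total a b with h | h
      · refine ⟨{a}, fun c h1 h2 => ⟨a, Finset.mem_singleton_self a, ?_⟩⟩
        rw [min_eq_left h] at h1; rw [max_eq_right h] at h2
        exact esymm (econv a c b h1 h2 hab)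
      · refine ⟨{a}, fun c h1 h2 => ⟨a, Finset.mem_singleton_self a, ?_⟩⟩
        rw [min_eq_right h] at h1; rw [max_eq_left h] at h2
        have hbc : E b c := econv b c a h1 h2 (esymm hab)
        exact etrans (esymm hbc) (esymm hab)
    have htrans : ∀ {a b c : L}, hausdorffRel E a b → hausdorffRel E b c →
        hausdorffRel E a c := by
      rintro a b c ⟨s1, h1⟩ ⟨s2, h2⟩
      refine ⟨s1 ∪ s2, fun x hx1 hx2 => ?_⟩
      rcases le_total x b with hxb | hbx
      · rcases min_cases a c with ⟨hm, _⟩ | ⟨hm, _⟩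
        · have hax : a ≤ x := by rw [hm] at hx1; exact hx1
          obtain ⟨d, hd, he⟩ := h1 x ((min_le_left a b).trans hax)
            (hxb.trans (le_max_right a b))
          exact ⟨d, Finset.mem_union_left _ hd, he⟩
        · have hcx : c ≤ x := by rw [hm] at hx1; exact hx1
          obtain ⟨d, hd, he⟩ := h2 x ((min_le_right b c).trans hcx)
            (hxb.trans (le_max_left b c))
          exact ⟨d, Finset.mem_union_right _ hd, he⟩
      · rcases max_cases a c with ⟨hm, _⟩ | ⟨hm, _⟩
        · have hxa : x ≤ a := by rw [hm] at hx2; exact hx2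
          obtain ⟨d, hd, he⟩ := h1 x ((min_le_right a b).trans hbx)
            (hxa.trans (le_max_left a b))
          exact ⟨d, Finset.mem_union_left _ hd, he⟩
        · have hxc : x ≤ c := by rw [hm] at hx2; exact hx2
          obtain ⟨d, hd, he⟩ := h2 x ((min_le_left b c).trans hbx)
            (hxc.trans (le_max_right b c))
          exact ⟨d, Finset.mem_union_right _ hd, he⟩
    refine ⟨⟨hrefl, hsymm, htrans⟩, ?_, ?_⟩
    · rintro a b c hab hbc ⟨s, hs⟩
      have hac : a ≤ c := hab.trans hbc
      refine ⟨s, fun x h1 h2 => ?_⟩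
      rw [min_eq_left hab] at h1; rw [max_eq_right hab] at h2
      exact hs x (by rw [min_eq_left hac]; exact h1)
        (by rw [max_eq_right hac]; exact h2.trans hbc)
    · intro β hβ a b h
      rcases eq_or_lt_of_le hβ with rfl | hlt
      · rwa [hiter_succ] at h
      · exact hincl a b (emono β (Order.lt_succ_iff.1 hlt) a b h)
  | limit γ hlim ih =>
    have hrefl : ∀ a : L, hausdorffIter L γ a a := by
      intro a
      refine (hiter_limit hlim a a).2 ⟨0, hlim.pos, ?_⟩
      rw [hiter_zero]
    have hsymm : ∀ {a b : L}, hausdorffIter L γ a b → hausdorffIter L γ b a := by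
      intro a b h
      obtain ⟨β, hβ, he⟩ := (hiter_limit hlim a b).1 h
      exact (hiter_limit hlim b a).2 ⟨β, hβ, (ih β hβ).1.symm he⟩
    have htrans : ∀ {a b c : L}, hausdorffIter L γ a b → hausdorffIter L γ b c →
        hausdorffIter L γ a c := by
      intro a b c h1 h2
      obtain ⟨β₁, hβ₁, he₁⟩ := (hiter_limit hlim a b).1 h1
      obtain ⟨β₂, hβ₂, he₂⟩ := (hiter_limit hlim b c).1 h2
      refine (hiter_limit hlim a c).2 ⟨max β₁ β₂, max_lt hβ₁ hβ₂, ?_⟩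
      exact (ih _ (max_lt hβ₁ hβ₂)).1.trans
        ((ih _ (max_lt hβ₁ hβ₂)).2.2 β₁ (le_max_left _ _) a b he₁)
        ((ih _ (max_lt hβ₁ hβ₂)).2.2 β₂ (le_max_right _ _) b c he₂)
    refine ⟨⟨hrefl, hsymm, htrans⟩, ?_, ?_⟩
    · intro a b c hab hbc h
      obtain ⟨β, hβ, he⟩ := (hiter_limit hlim a c).1 h
      exact (hiter_limit hlim a b).2 ⟨β, hβ, (ih β hβ).2.1 a b c hab hbc he⟩
    · intro β hβ a b h
      rcases eq_or_lt_of_le hβ with rfl | hlt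
      · exact h
      · exact (hiter_limit hlim a b).2 ⟨β, hlt, h⟩

theorem hiter_refl (γ : Ordinal.{0}) (a : L) : hausdorffIter L γ a a :=
  (hiter_pkg γ).1.refl a

theorem hiter_symm {γ : Ordinal.{0}} {a b : L} (h : hausdorffIter L γ a b) :
    hausdorffIter L γ b a := (hiter_pkg γ).1.symm h

theorem hiter_trans {γ : Ordinal.{0}} {a b c : L} (h1 : hausdorffIter L γ a b)
    (h2 : hausdorffIter L γ b c) : hausdorffIter L γ a c := (hiter_pkg γ).1.trans h1 h2

theorem hiter_convexL {γ : Ordinal.{0}} {a b c : L} (hab : a ≤ b) (hbc : b ≤ c)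
    (h : hausdorffIter L γ a c) : hausdorffIter L γ a b := (hiter_pkg γ).2.1 a b c hab hbc h

theorem hiter_mono {β γ : Ordinal.{0}} (h : β ≤ γ) {a b : L} (he : hausdorffIter L β a b) :
    hausdorffIter L γ a b := (hiter_pkg γ).2.2 β h a b he

theorem hiter_one_of_cover {x y : L} (s : Finset L)
    (h : ∀ c : L, min x y ≤ c → c ≤ max x y → c ∈ s) : hausdorffIter L 1 x y := by
  have h1 : (1 : Ordinal.{0}) = Order.succ 0 := by
    rw [← Ordinal.add_one_eq_succ, zero_add]
  rw [h1, hiter_succ]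
  refine ⟨s, fun c h1 h2 => ⟨c, h c h1 h2, ?_⟩⟩
  rw [hiter_zero]

end Hausdorff
section TreeLemmas

variable {T : Set (List Symb)}

/-- abbreviation for the domain hypothesis -/
def HDom (T : Set (List Symb)) : Prop := ∀ σ ∈ T, ∀ s ∈ σ, ∃ n : ℕ, s = Symb.pair (2 * n)

theorem not_mem_T_fin (hdom : HDom T) (ρ : List Symb) (k : ℕ) : ρ ++ [Symb.fin k] ∉ T := by
  intro h
  obtain ⟨n, hn⟩ := hdom _ h (Symb.fin k) (List.mem_append_right _ (List.mem_singleton.2 rfl))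
  exact Symb.noConfusion hn

theorem not_mem_T_infty (hdom : HDom T) (ρ : List Symb) : ρ ++ [Symb.infty] ∉ T := by
  intro h
  obtain ⟨n, hn⟩ := hdom _ h Symb.infty (List.mem_append_right _ (List.mem_singleton.2 rfl))
  exact Symb.noConfusion hn

theorem mem_tplus_fin (hdom : HDom T) {ρ : List Symb} (hρ : ρ ∈ T) (k : ℕ) :
    ρ ++ [Symb.fin k] ∈ Tplus T :=
  ⟨ρ, hρ, Symb.fin k, rfl, not_mem_T_fin hdom ρ k⟩

theorem mem_tplus_infty (hdom : HDom T) {ρ : List Symb} (hρ : ρ ∈ T) :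
    ρ ++ [Symb.infty] ∈ Tplus T :=
  ⟨ρ, hρ, Symb.infty, rfl, not_mem_T_infty hdom ρ⟩

theorem tplus_not_mem {x : List Symb} (hx : x ∈ Tplus T) : x ∉ T := by
  obtain ⟨σ, _, a, rfl, hn⟩ := hx
  exact hn

theorem tplus_proper_prefix (hTree : IsTree T) {x σ : List Symb} (hx : x ∈ Tplus T)
    (hpre : σ <+: x) (hne : σ ≠ x) : σ ∈ T := by
  obtain ⟨τ, hτ, a, rfl, _⟩ := hx
  have hlen : σ.length ≤ τ.length := by
    have h1 := hpre.length_le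
    rw [List.length_append, List.length_singleton] at h1
    rcases Nat.lt_or_ge σ.length (τ.length + 1) with h | h
    · omega
    · exfalso
      exact hne (List.IsPrefix.eq_of_length_le hpre (by
        rw [List.length_append, List.length_singleton]; omega))
  have : σ <+: τ := by
    have h1 : σ = (τ ++ [a]).take σ.length := (List.prefix_iff_eq_take.1 hpre)
    rw [List.take_append_of_le_length hlen] at h1
    rw [h1]
    exact List.take_prefix _ _
  exact hTree τ hτ σ this

theorem interval_prefix (hTree : IsTree T) (hdom : HDom T) {ρ x : List Symb} {k : ℕ}
    (hx : x ∈ Tplus T)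
    (h1 : ρ ++ [Symb.fin k] < x) (h2 : x < ρ ++ [Symb.fin (k+1)]) :
    ρ ++ [Symb.pair k] <+: x := by
  obtain ⟨z, rfl, hz1, hz2⟩ := lex_sandwich h1 h2
  obtain ⟨b, y, rfl, hcb, hbd, hne⟩ := z_decomp hz1 hz2
  rcases Symb.eq_fin_or_pair hcb hbd with rfl | rfl
  · exfalso
    have hy : y ≠ [] := hne rfl
    have hpre : ρ ++ [Symb.fin k] <+: ρ ++ Symb.fin k :: y :=
      ⟨y, by simp⟩
    have hne2 : ρ ++ [Symb.fin k] ≠ ρ ++ Symb.fin k :: y := by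
      intro he
      have := List.append_cancel_left he
      simp only [List.cons.injEq] at this
      exact hy this.2.symm
    exact not_mem_T_fin hdom ρ k (tplus_proper_prefix hTree hx hpre hne2)
  · exact ⟨y, by simp⟩

theorem prefix_lt {ρ : List Symb} {k : ℕ} {x : List Symb} (h : ρ ++ [Symb.pair k] <+: x) :
    ρ ++ [Symb.fin k] < x ∧ x < ρ ++ [Symb.fin (k+1)] := by
  obtain ⟨y, rfl⟩ := h
  rw [List.append_assoc, List.singleton_append]
  constructor
  · exact list_append_lt_append_iff.2 (List.Lex.rel (Symb.fin_lt_pair.2 le_rfl))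
  · exact list_append_lt_append_iff.2 (List.Lex.rel (Symb.pair_lt_fin.2 k.lt_succ_self))

theorem endpoints_lt (ρ : List Symb) (k m : ℕ) (h : k < m) :
    ρ ++ [Symb.fin k] < ρ ++ [Symb.fin m] :=
  list_append_lt_append_iff.2 (List.Lex.rel (Symb.fin_lt_fin.2 h))

/-- nothing in `Tplus T` lies strictly between `ρ⌢fin k` and `ρ⌢(pair k)⌢fin 0`. -/
theorem no_between_left (hTree : IsTree T) (hdom : HDom T) {ρ x : List Symb} {k : ℕ}
    (hσ : ρ ++ [Symb.pair k] ∈ T) (hx : x ∈ Tplus T)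
    (h1 : ρ ++ [Symb.fin k] < x) (h2 : x < (ρ ++ [Symb.pair k]) ++ [Symb.fin 0]) : False := by
  have h2' : x < ρ ++ [Symb.fin (k+1)] := by
    refine h2.trans ?_
    rw [List.append_assoc, List.singleton_append]
    exact list_append_lt_append_iff.2 (List.Lex.rel (Symb.pair_lt_fin.2 k.lt_succ_self))
  obtain ⟨z, rfl⟩ := interval_prefix hTree hdom hx h1 h2'
  have hz : z < [Symb.fin 0] := list_append_lt_append_iff.1 h2
  cases z with
  | nil =>
    exact tplus_not_mem hx (by rw [List.append_nil]; exact hσ)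
  | cons b y =>
    rcases list_cons_lt_cons_iff.1 hz with h | ⟨rfl, h⟩
    · exact Symb.not_lt_fin_zero b h
    · exact list_not_lt_nil _ h

/-- nothing in `Tplus T` lies strictly between `ρ⌢(pair k)⌢∞` and `ρ⌢fin (k+1)`. -/
theorem no_between_right (hTree : IsTree T) (hdom : HDom T) {ρ x : List Symb} {k : ℕ}
    (hx : x ∈ Tplus T)
    (h1 : (ρ ++ [Symb.pair k]) ++ [Symb.infty] < x) (h2 : x < ρ ++ [Symb.fin (k+1)]) :
    False := by
  have h1' : ρ ++ [Symb.fin k] < x := by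
    refine lt_trans ?_ h1
    rw [List.append_assoc, List.singleton_append]
    exact list_append_lt_append_iff.2 (List.Lex.rel (Symb.fin_lt_pair.2 le_rfl))
  obtain ⟨z, rfl⟩ := interval_prefix hTree hdom hx h1' h2
  have hz : [Symb.infty] < z := list_append_lt_append_iff.1 h1
  cases z with
  | nil => exact list_not_lt_nil _ hz
  | cons b y =>
    rcases list_cons_lt_cons_iff.1 hz with h | ⟨rfl, h⟩
    · exact Symb.not_infty_lt h
    · -- x = ρ⌢pair k⌢∞ ++ y with y ≠ []
      have hy : y ≠ [] := by
        intro he; rw [he] at h; exact list_not_lt_nil _ h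
      have hpre : (ρ ++ [Symb.pair k]) ++ [Symb.infty] <+:
          ρ ++ [Symb.pair k] ++ (Symb.infty :: y) := ⟨y, by simp⟩
      have hne : (ρ ++ [Symb.pair k]) ++ [Symb.infty] ≠
          ρ ++ [Symb.pair k] ++ (Symb.infty :: y) := by
        intro he
        have := List.append_cancel_left he
        simp only [List.cons.injEq] at this
        exact hy this.2.symm
      exact not_mem_T_infty hdom _ (tplus_proper_prefix hTree hx hpre hne)

/-- an element of the block below `σ` which is below `σ⌢∞` is between `σ⌢fin 0` and
some `σ⌢fin M`. -/
theorem block_bounds {σ x : List Symb} (hσ : σ ∈ T) (hx : x ∈ Tplus T)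
    (hpre : σ <+: x) (hlt : x < σ ++ [Symb.infty]) :
    ∃ M : ℕ, σ ++ [Symb.fin 0] ≤ x ∧ x ≤ σ ++ [Symb.fin M] := by
  obtain ⟨z, rfl⟩ := hpre
  cases z with
  | nil => exact absurd (by rw [List.append_nil]; exact hσ) (tplus_not_mem hx)
  | cons b y =>
    have hz : b :: y < [Symb.infty] := list_append_lt_append_iff.1 hlt
    have hb : b < Symb.infty := by
      rcases list_cons_lt_cons_iff.1 hz with h | ⟨rfl, h⟩
      · exact h
      · exact absurd h (list_not_lt_nil _)
    obtain ⟨M, hM⟩ := Symb.lt_infty_exists hb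
    refine ⟨M, ?_, le_of_lt ?_⟩
    · rcases lt_or_eq_of_le (Symb.fin_zero_le b) with h | rfl
      · exact le_of_lt (list_append_lt_append_iff.2 (List.Lex.rel h))
      · rw [show σ ++ Symb.fin 0 :: y = (σ ++ [Symb.fin 0]) ++ y by simp]
        exact list_le_append _ _
    · exact list_append_lt_append_iff.2 (List.Lex.rel hM)

end TreeLemmas
section MainLemmas

variable {T : Set (List Symb)}

theorem h1_two_point {x y : {l : List Symb // l ∈ Tplus T}} (hxy : x ≤ y)
    (h : ∀ c : {l : List Symb // l ∈ Tplus T}, x < c → c < y → False) :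
    hausdorffIter {l : List Symb // l ∈ Tplus T} 1 x y := by
  classical
  apply hiter_one_of_cover ({x, y} : Finset _)
  intro c h1 h2
  rw [min_eq_left hxy] at h1
  rw [max_eq_right hxy] at h2
  rcases eq_or_lt_of_le h1 with heq | h1'
  · simp [← heq]
  rcases eq_or_lt_of_le h2 with heq | h2'
  · simp [heq]
  exact absurd (h c h1' h2') (fun h => h)

theorem h1_notmem (hTree : IsTree T) (hdom : HDom T) {ρ : List Symb} (hρ : ρ ∈ T) (k : ℕ)
    (hσ : ρ ++ [Symb.pair k] ∉ T) :
    hausdorffIter {l : List Symb // l ∈ Tplus T} 1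
      ⟨ρ ++ [Symb.fin k], mem_tplus_fin hdom hρ k⟩
      ⟨ρ ++ [Symb.fin (k+1)], mem_tplus_fin hdom hρ (k+1)⟩ := by
  classical
  have hmid : ρ ++ [Symb.pair k] ∈ Tplus T := ⟨ρ, hρ, _, rfl, hσ⟩
  apply hiter_one_of_cover
    ({⟨ρ ++ [Symb.fin k], mem_tplus_fin hdom hρ k⟩, ⟨ρ ++ [Symb.pair k], hmid⟩,
      ⟨ρ ++ [Symb.fin (k+1)], mem_tplus_fin hdom hρ (k+1)⟩} : Finset _)
  intro c h1 h2
  have hord : (⟨ρ ++ [Symb.fin k], mem_tplus_fin hdom hρ k⟩ :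
      {l : List Symb // l ∈ Tplus T}) ≤ ⟨ρ ++ [Symb.fin (k+1)], mem_tplus_fin hdom hρ (k+1)⟩ :=
    le_of_lt (Subtype.mk_lt_mk.2 (endpoints_lt ρ k (k+1) k.lt_succ_self))
  rw [min_eq_left hord] at h1
  rw [max_eq_right hord] at h2
  rcases eq_or_lt_of_le h1 with heq | h1'
  · simp [← heq]
  rcases eq_or_lt_of_le h2 with heq | h2'
  · simp [heq]
  have hpre : ρ ++ [Symb.pair k] <+: c.1 :=
    interval_prefix hTree hdom c.2 (Subtype.coe_lt_coe.2 h1') (Subtype.coe_lt_coe.2 h2')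
  by_cases he : ρ ++ [Symb.pair k] = c.1
  · have : c = ⟨ρ ++ [Symb.pair k], hmid⟩ := Subtype.ext he.symm
    simp [this]
  · exact absurd (tplus_proper_prefix hTree c.2 hpre he) hσ

theorem upper (hTree : IsTree T) (hdom : HDom T) (hwf : WellFoundedTree T)
    (γ : Ordinal.{0}) : ∀ (ρ : List Symb) (k : ℕ) (hρ : ρ ∈ T)
    (hσ : ρ ++ [Symb.pair k] ∈ T), prk T (ρ ++ [Symb.pair k]) = γ →
    hausdorffIter {l : List Symb // l ∈ Tplus T} (γ + 2)
      ⟨ρ ++ [Symb.fin k], mem_tplus_fin hdom hρ k⟩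
      ⟨ρ ++ [Symb.fin (k+1)], mem_tplus_fin hdom hρ (k+1)⟩ := by
  classical
  induction γ using Ordinal.induction with
  | h γ IH =>
  intro ρ k hρ hσ hprk
  set L := {l : List Symb // l ∈ Tplus T} with hL
  set x0 : L := ⟨ρ ++ [Symb.fin k], mem_tplus_fin hdom hρ k⟩ with hx0
  set x1 : L := ⟨ρ ++ [Symb.fin (k+1)], mem_tplus_fin hdom hρ (k+1)⟩ with hx1
  have hx01 : x0 < x1 := Subtype.mk_lt_mk.2 (endpoints_lt ρ k (k+1) k.lt_succ_self)
  have h2succ : γ + 2 = Order.succ (γ + 1) := by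
    rw [← one_add_one_eq_two, ← add_assoc, Ordinal.add_one_eq_succ]
  rw [h2succ, hiter_succ]
  have hone : (1 : Ordinal.{0}) ≤ γ + 1 := by
    simpa using add_le_add_right (Ordinal.zero_le γ) 1
  have hmemf : ∀ m : ℕ, (ρ ++ [Symb.pair k]) ++ [Symb.fin m] ∈ Tplus T :=
    fun m => mem_tplus_fin hdom hσ m
  set p : ℕ → L := fun m => ⟨(ρ ++ [Symb.pair k]) ++ [Symb.fin m], hmemf m⟩ with hp
  -- consecutive points of the block are related
  have hstep : ∀ m : ℕ, hausdorffIter L (γ + 1) (p m) (p (m+1)) := by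
    intro m
    by_cases hc : (ρ ++ [Symb.pair k]) ++ [Symb.pair m] ∈ T
    · have hlt : prk T ((ρ ++ [Symb.pair k]) ++ [Symb.pair m]) < γ :=
        hprk ▸ prk_child_lt hTree hwf hσ hc
      have hrec := IH _ hlt (ρ ++ [Symb.pair k]) m hσ hc rfl
      refine hiter_mono ?_ hrec
      have h1 : prk T ((ρ ++ [Symb.pair k]) ++ [Symb.pair m]) + 1 ≤ γ := by
        rw [Ordinal.add_one_eq_succ]
        exact Order.succ_le_of_lt hlt
      calc prk T ((ρ ++ [Symb.pair k]) ++ [Symb.pair m]) + 2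
          = (prk T ((ρ ++ [Symb.pair k]) ++ [Symb.pair m]) + 1) + 1 := by
            rw [add_assoc, one_add_one_eq_two]
        _ ≤ γ + 1 := add_le_add_left h1 1
    · exact hiter_mono hone (h1_notmem hTree hdom hσ m hc)
  have hchain : ∀ m : ℕ, hausdorffIter L (γ + 1) (p 0) (p m) := by
    intro m
    induction m with
    | zero => exact hiter_refl _ _
    | succ m ih => exact hiter_trans ih (hstep m)
  -- x0 is adjacent to p 0
  have hx0p0 : x0 < p 0 := by
    refine Subtype.mk_lt_mk.2 ?_
    exact (prefix_lt ⟨[Symb.fin 0], rfl⟩).1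
  have hleft : hausdorffIter L (γ + 1) x0 (p 0) := by
    refine hiter_mono hone (h1_two_point (le_of_lt hx0p0) ?_)
    intro c hc1 hc2
    exact no_between_left hTree hdom hσ c.2 (Subtype.coe_lt_coe.2 hc1)
      (Subtype.coe_lt_coe.2 hc2)
  -- σ⌢∞ is adjacent to x1
  set pinf : L := ⟨(ρ ++ [Symb.pair k]) ++ [Symb.infty], mem_tplus_infty hdom hσ⟩ with hpinf
  have hpinfx1 : pinf < x1 := by
    refine Subtype.mk_lt_mk.2 ?_
    rw [List.append_assoc]
    exact list_append_lt_append_iff.2 (List.Lex.rel (Symb.pair_lt_fin.2 k.lt_succ_self))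
  have hright : hausdorffIter L (γ + 1) pinf x1 := by
    refine hiter_mono hone (h1_two_point (le_of_lt hpinfx1) ?_)
    intro c hc1 hc2
    exact no_between_right hTree hdom c.2 (Subtype.coe_lt_coe.2 hc1)
      (Subtype.coe_lt_coe.2 hc2)
  -- the cover
  refine ⟨{x0, x1}, fun c h1 h2 => ?_⟩
  rw [min_eq_left (le_of_lt hx01)] at h1
  rw [max_eq_right (le_of_lt hx01)] at h2
  rcases eq_or_lt_of_le h1 with heq | h1'
  · exact ⟨x0, by simp, by rw [← heq]; exact hiter_refl _ x0⟩
  rcases eq_or_lt_of_le h2 with heq | h2'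
  · exact ⟨x1, by simp, by rw [heq]; exact hiter_refl _ x1⟩
  have hpre : ρ ++ [Symb.pair k] <+: c.1 :=
    interval_prefix hTree hdom c.2 (Subtype.coe_lt_coe.2 h1') (Subtype.coe_lt_coe.2 h2')
  rcases lt_trichotomy c pinf with hlt | heq | hgt
  · obtain ⟨M, hM0, hMM⟩ := block_bounds hσ c.2 hpre (Subtype.coe_lt_coe.2 hlt)
    have hp0c : p 0 ≤ c := Subtype.coe_le_coe.1 hM0
    have hcpM : c ≤ p M := Subtype.coe_le_coe.1 hMM
    have hEc : hausdorffIter L (γ + 1) (p 0) c := hiter_convexL hp0c hcpM (hchain M)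
    exact ⟨x0, by simp, hiter_symm (hiter_trans hleft hEc)⟩
  · exact ⟨x1, by simp, by rw [heq]; exact hright⟩
  · exact absurd (no_between_right hTree hdom c.2 (Subtype.coe_lt_coe.2 hgt)
      (Subtype.coe_lt_coe.2 h2')) (fun h => h)

end MainLemmas
section LowerLemma

variable {T : Set (List Symb)}

theorem lower (hTree : IsTree T) (hdom : HDom T) (hwf : WellFoundedTree T) (hfat : FatTree T)
    (α : Ordinal.{0}) : ∀ (ρ : List Symb) (k : ℕ) (hρ : ρ ∈ T)
    (hσ : ρ ++ [Symb.pair k] ∈ T), α ≤ prk T (ρ ++ [Symb.pair k]) + 1 →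
    ¬ hausdorffIter {l : List Symb // l ∈ Tplus T} α
      ⟨ρ ++ [Symb.fin k], mem_tplus_fin hdom hρ k⟩
      ⟨ρ ++ [Symb.fin (k+1)], mem_tplus_fin hdom hρ (k+1)⟩ := by
  classical
  induction α using Ordinal.induction with
  | h α IH =>
  intro ρ k hρ hσ hα hcon
  set L := {l : List Symb // l ∈ Tplus T} with hLdef
  set x0 : L := ⟨ρ ++ [Symb.fin k], mem_tplus_fin hdom hρ k⟩ with hx0
  set x1 : L := ⟨ρ ++ [Symb.fin (k+1)], mem_tplus_fin hdom hρ (k+1)⟩ with hx1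
  have hx01 : x0 ≤ x1 :=
    le_of_lt (Subtype.mk_lt_mk.2 (endpoints_lt ρ k (k+1) k.lt_succ_self))
  have hmemf : ∀ m : ℕ, (ρ ++ [Symb.pair k]) ++ [Symb.fin m] ∈ Tplus T :=
    fun m => mem_tplus_fin hdom hσ m
  set q : ℕ → L := fun m => ⟨(ρ ++ [Symb.pair k]) ++ [Symb.fin m], hmemf m⟩ with hq
  have hqin : ∀ m : ℕ, x0 ≤ q m ∧ q m ≤ x1 := by
    intro m
    have h := prefix_lt (x := (ρ ++ [Symb.pair k]) ++ [Symb.fin m]) ⟨[Symb.fin m], rfl⟩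
    exact ⟨le_of_lt (Subtype.mk_lt_mk.2 h.1), le_of_lt (Subtype.mk_lt_mk.2 h.2)⟩
  have hqmono : ∀ m m' : ℕ, m ≤ m' → q m ≤ q m' := by
    intro m m' h
    rcases eq_or_lt_of_le h with rfl | h'
    · exact le_rfl
    · exact le_of_lt (Subtype.mk_lt_mk.2
        (list_append_lt_append_iff.2 (List.Lex.rel (Symb.fin_lt_fin.2 h'))))
  have hqinj : Function.Injective q := by
    intro m m' h
    have := congrArg Subtype.val h
    have h2 := List.append_cancel_left this
    simp only [List.cons.injEq, Symb.fin.injEq, and_true] at h2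
    exact h2
  rcases Ordinal.zero_or_succ_or_isSuccLimit α with rfl | ⟨β, rfl⟩ | hlim
  · rw [hiter_zero] at hcon
    have h1 := congrArg Subtype.val hcon
    have h2 := List.append_cancel_left h1
    simp only [List.cons.injEq, Symb.fin.injEq, and_true] at h2
    omega
  · rw [hiter_succ] at hcon
    obtain ⟨s, hs⟩ := hcon
    rw [min_eq_left hx01] at hs
    rw [max_eq_right hx01] at hs
    by_cases hβ0 : β = 0
    · subst hβ0
      simp only [hiter_zero] at hs
      have hex : ∀ m : ℕ, ∃ d, d ∈ s ∧ q m = d :=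
        fun m => by
          obtain ⟨d, hd, he⟩ := hs (q m) (hqin m).1 (hqin m).2
          exact ⟨d, hd, he⟩
      choose f hf1 hf2 using hex
      have hginj : Function.Injective (fun m : ℕ => (⟨f m, hf1 m⟩ : {d // d ∈ s})) := by
        intro m m' h
        simp only [Subtype.mk.injEq] at h
        exact hqinj ((hf2 m).trans (h.trans (hf2 m').symm))
      haveI := Finite.of_injective _ hginj
      exact not_finite ℕ
    · have hβpos : 0 < β := pos_iff_ne_zero.2 hβ0
      have hβlt : β < prk T (ρ ++ [Symb.pair k]) + 1 := lt_of_lt_of_le (Order.lt_succ β) hα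
      have hfatσ := hfat (ρ ++ [Symb.pair k]) hσ ((β : Ordinal.{0}) : WithTop Ordinal.{0})
        (by exact_mod_cast Order.one_le_iff_pos.2 hβpos)
        (Or.inl (by rw [erank_eq hTree hwf hσ]; exact WithTop.coe_lt_coe.2 hβlt))
      set M : Set ℕ := {m : ℕ | (ρ ++ [Symb.pair k]) ++ [Symb.pair m] ∈ T ∧
        erank T ((ρ ++ [Symb.pair k]) ++ [Symb.pair m]) = ((β : Ordinal.{0}) : WithTop Ordinal.{0})}
        with hMdef
      have hMinf : M.Infinite := by
        refine Set.Infinite.of_image (f := Symb.pair) ?_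
        refine Set.Infinite.mono ?_ hfatσ
        rintro a ⟨haT, haE⟩
        obtain ⟨n, rfl⟩ := hdom _ haT a (List.mem_append_right _ (List.mem_singleton.2 rfl))
        exact ⟨2 * n, ⟨haT, haE⟩, rfl⟩
      have hno : ∀ m ∈ M, ¬ hausdorffIter L β (q m) (q (m+1)) := by
        intro m hm
        have hprkm : prk T ((ρ ++ [Symb.pair k]) ++ [Symb.pair m]) + 1 = β := by
          have := erank_eq hTree hwf hm.1
          rw [hm.2] at this
          exact_mod_cast this.symm
        exact IH β (Order.lt_succ β) (ρ ++ [Symb.pair k]) m hσ hm.1 (le_of_eq hprkm.symm)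
      have hex : ∀ m : ℕ, ∃ d, d ∈ s ∧ hausdorffIter L β (q m) d :=
        fun m => by
          obtain ⟨d, hd, he⟩ := hs (q m) (hqin m).1 (hqin m).2
          exact ⟨d, hd, he⟩
      choose f hf1 hf2 using hex
      have key : ∀ m m', m ∈ M → m < m' → f m = f m' → False := by
        intro m m' hm hmm' hfe
        have h1 : hausdorffIter L β (q m) (q m') :=
          hiter_trans (hf2 m) (hiter_symm (hfe ▸ hf2 m'))
        have h2 : hausdorffIter L β (q m) (q (m+1)) :=
          hiter_convexL (hqmono m (m+1) (Nat.le_succ m)) (hqmono (m+1) m' hmm') h1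
        exact hno m hm h2
      have hginj : Function.Injective
          (fun m : ↥M => (⟨f m.1, hf1 m.1⟩ : {d // d ∈ s})) := by
        rintro ⟨m, hm⟩ ⟨m', hm'⟩ h
        simp only [Subtype.mk.injEq] at h ⊢
        rcases lt_trichotomy m m' with hlt | heq | hgt
        · exact absurd (key m m' hm hlt h) (fun h => h)
        · exact heq
        · exact absurd (key m' m hm' hgt h.symm) (fun h => h)
      haveI := hMinf.to_subtype
      haveI := Finite.of_injective _ hginj
      exact not_finite ↥M
  · rw [hiter_limit hlim] at hcon
    obtain ⟨β, hβ, h⟩ := hcon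
    exact IH β hβ ρ k hρ hσ (le_trans (le_of_lt hβ) hα) h

end LowerLemma

/-- for a well-founded fat tree `T ⊆ (2Ω)^{<ω}`, for all `ρ ∈ T`, `n ∈ ω`
and ordinals `α ≥ 1`, the elements `ρ⌢n` and `ρ⌢(n+1)` of `L_T = T⁺` lie in the same
class of the `α`-th Hausdorff iterate of `L_T` if and only if the rank of `ρ⌢(n,n+1)`
in `T` is strictly less than `α` (where `r_T(σ) = 0` if `σ ∉ T`). -/
theorem hausdorff_iter_classes_vs_rank (T : Set (List Symb)) (hTree : IsTree T)
    (hdom : ∀ σ ∈ T, ∀ s ∈ σ, ∃ n : ℕ, s = Symb.pair (2 * n))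
    (hwf : WellFoundedTree T) (hfat : FatTree T)
    (ρ : List Symb) (hρ : ρ ∈ T) (n : ℕ) (α : Ordinal.{0}) (hα : 1 ≤ α)
    (h1 : ρ ++ [Symb.fin n] ∈ Tplus T) (h2 : ρ ++ [Symb.fin (n + 1)] ∈ Tplus T) :
    hausdorffIter {l : List Symb // l ∈ Tplus T} α ⟨ρ ++ [Symb.fin n], h1⟩
        ⟨ρ ++ [Symb.fin (n + 1)], h2⟩ ↔
      erank0 T (ρ ++ [Symb.pair n]) < (α : WithTop Ordinal.{0}) := by
  classical
  have hdom' : HDom T := hdom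
  by_cases hmem : ρ ++ [Symb.pair n] ∈ T
  · rw [erank0, if_pos hmem, erank_eq hTree hwf hmem]
    constructor
    · intro h
      by_contra hlt
      rw [not_lt] at hlt
      have hle : α ≤ prk T (ρ ++ [Symb.pair n]) + 1 := by exact_mod_cast hlt
      exact lower hTree hdom' hwf hfat α ρ n hρ hmem hle h
    · intro h
      have hlt : prk T (ρ ++ [Symb.pair n]) + 1 < α := by exact_mod_cast h
      have h2 : prk T (ρ ++ [Symb.pair n]) + 2 ≤ α := by
        have h3 := Order.succ_le_of_lt hlt
        rwa [← Ordinal.add_one_eq_succ, add_assoc, one_add_one_eq_two] at h3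
      exact hiter_mono h2 (upper hTree hdom' hwf _ ρ n hρ hmem rfl)
  · rw [erank0, if_neg hmem]
    have hrhs : (0 : WithTop Ordinal.{0}) < (α : WithTop Ordinal.{0}) := by
      exact_mod_cast lt_of_lt_of_le zero_lt_one hα
    refine iff_of_true ?_ hrhs
    exact hiter_mono hα (h1_notmem hTree hdom' hρ n hmem)
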